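/- Let 0 ≤ k ≤ n and J ∈ JP(k,2n). Then p_J ∈ X(k,2n)^{sp} if and only if J ⊆ RJ, i.e. if and only if J_i ⊆ R(J_{−i}) for all i ∈ ℤ/2nℤ. -/

import Mathlib

open Matrix

/-- The Gram matrix Ω of the symplectic form: Ω_{s,t} = (−1)^{s+1} if s+t = 2n+1
(1-indexed) and 0 otherwise. -/
noncomputable def Omega (n : ℕ) : Matrix (Fin (2*n)) (Fin (2*n)) ℂ :=
  Matrix.of fun s t =>
    if ((s : ℕ) + 1) + ((t : ℕ) + 1) = 2*n + 1 then (-1 : ℂ)^((s : ℕ) + 1 + 1) else 0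

/-- The symplectic bilinear form ⟨v,w⟩ = vᵀ Ω w on ℂ^{2n}. -/
noncomputable def sform (n : ℕ) (v w : Fin (2*n) → ℂ) : ℂ :=
  v ⬝ᵥ (Omega n).mulVec w

/-- The form, as a linear map in its first argument (second argument fixed). -/
noncomputable def sformL (n : ℕ) (w : Fin (2*n) → ℂ) : (Fin (2*n) → ℂ) →ₗ[ℂ] ℂ where
  toFun v := sform n v w
  map_add' a b := by simp [sform, add_dotProduct]
  map_smul' c a := by simp [sform, smul_dotProduct]

/-- Orthogonal complement W^⊥ = {v | ⟨v,w⟩ = 0 for all w ∈ W} w.r.t. the symplectic form. -/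
noncomputable def sperp (n : ℕ) (W : Submodule ℂ (Fin (2*n) → ℂ)) :
    Submodule ℂ (Fin (2*n) → ℂ) :=
  ⨅ w ∈ W, LinearMap.ker (sformL n w)

theorem mem_sperp {n : ℕ} {W : Submodule ℂ (Fin (2*n) → ℂ)} {v : Fin (2*n) → ℂ} :
    v ∈ sperp n W ↔ ∀ w ∈ W, sform n v w = 0 := by
  simp only [sperp, Submodule.mem_iInf, LinearMap.mem_ker]
  rfl

/-- The matrix of the shift map τ₁ : e_j ↦ e_{j+1} (1 ≤ j ≤ 2n−1), e_{2n} ↦ 0. -/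
noncomputable def tauMat (n : ℕ) : Matrix (Fin (2*n)) (Fin (2*n)) ℂ :=
  Matrix.of fun s t => if (s : ℕ) = (t : ℕ) + 1 then 1 else 0

/-- Membership in X(k,2n): a tuple of k-dimensional subspaces of ℂ^{2n} indexed by
ℤ/2nℤ with τ₁(V_i) ⊆ V_{i+1} for all i. -/
def memX (n k : ℕ) (V : ZMod (2*n) → Submodule ℂ (Fin (2*n) → ℂ)) : Prop :=
  (∀ i, Module.finrank ℂ (V i) = k) ∧
  (∀ i, Submodule.map (tauMat n).mulVecLin (V i) ≤ V (i + 1))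


/-- A (k,2n)-juggling pattern: a tuple, indexed by ℤ/2nℤ, of k-element subsets of
{1,…,2n} such that for all i and all j ∈ {1,…,2n−1}, j ∈ J_i implies j+1 ∈ J_{i+1}. -/
def IsJP (n k : ℕ) (J : ZMod (2*n) → Finset ℕ) : Prop :=
  (∀ i, J i ⊆ Finset.Icc 1 (2*n)) ∧ (∀ i, (J i).card = k) ∧
  (∀ i, ∀ j : ℕ, 1 ≤ j → j ≤ 2*n - 1 → j ∈ J i → j + 1 ∈ J (i + 1))

/-- RI = {1,…,2n} ∖ {2n+1−i : i ∈ I}. -/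
def RSet (n : ℕ) (I : Finset ℕ) : Finset ℕ :=
  (Finset.Icc 1 (2*n)) \ (I.image fun i => 2*n + 1 - i)

/-- (RJ)_i = R(J_{−i}). -/
def RJP (n : ℕ) (J : ZMod (2*n) → Finset ℕ) : ZMod (2*n) → Finset ℕ :=
  fun i => RSet n (J (-i))

/-- The coordinate subspace V_I = span{e_j : j ∈ I} ⊆ ℂ^{2n}, where elements of I
are 1-indexed. -/
noncomputable def coordSub (n : ℕ) (I : Finset ℕ) : Submodule ℂ (Fin (2*n) → ℂ) :=
  Submodule.span ℂ {v | ∃ j : Fin (2*n), (j : ℕ) + 1 ∈ I ∧ v = Pi.single j 1}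

/-- Membership in X(k,2n)^{sp}: points of X(k,2n) with V_i ⊆ (V_{−i})^⊥ for all i. -/
def memXsp (n k : ℕ) (V : ZMod (2*n) → Submodule ℂ (Fin (2*n) → ℂ)) : Prop :=
  memX n k V ∧ ∀ i, V i ≤ sperp n (V (-i))

lemma sform_single (n : ℕ) (s t : Fin (2*n)) :
    sform n (Pi.single s 1) (Pi.single t 1) = Omega n s t := by
  simp [sform, Matrix.mulVec_single, single_dotProduct]

lemma Omega_eq_zero_iff {n : ℕ} {s t : Fin (2*n)} :
    Omega n s t = 0 ↔ ¬ ((s : ℕ) + 1) + ((t : ℕ) + 1) = 2*n + 1 := by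
  unfold Omega
  simp only [Matrix.of_apply]
  split <;> simp_all [pow_ne_zero]

lemma sform_add_right (n : ℕ) (v a b : Fin (2*n) → ℂ) :
    sform n v (a + b) = sform n v a + sform n v b := by
  simp [sform, Matrix.mulVec_add, dotProduct_add]

lemma sform_smul_right (n : ℕ) (c : ℂ) (v a : Fin (2*n) → ℂ) :
    sform n v (c • a) = c * sform n v a := by
  simp [sform, Matrix.mulVec_smul, dotProduct_smul, smul_eq_mul]

lemma sform_zero_right (n : ℕ) (v : Fin (2*n) → ℂ) : sform n v 0 = 0 := by
  simp [sform]

lemma single_mem_coordSub {n : ℕ} {I : Finset ℕ} {j : Fin (2*n)} (h : (j:ℕ)+1 ∈ I) :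
    Pi.single j (1:ℂ) ∈ coordSub n I := Submodule.subset_span ⟨j, h, rfl⟩

lemma coordSub_le_sperp_iff {n : ℕ} {I I' : Finset ℕ} :
    coordSub n I ≤ sperp n (coordSub n I') ↔
      ∀ s t : Fin (2*n), (s:ℕ)+1 ∈ I → (t:ℕ)+1 ∈ I' → Omega n s t = 0 := by
  constructor
  · intro h s t hs ht
    have := (mem_sperp.mp (h (single_mem_coordSub hs))) _ (single_mem_coordSub ht)
    rwa [sform_single] at this
  · intro h
    rw [coordSub, Submodule.span_le]
    rintro v ⟨s, hs, rfl⟩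
    rw [SetLike.mem_coe, mem_sperp]
    intro w hw
    induction hw using Submodule.span_induction with
    | mem x hx =>
      obtain ⟨t, ht, rfl⟩ := hx
      rw [sform_single]; exact h s t hs ht
    | zero => exact sform_zero_right n _
    | add a b _ _ ha hb => rw [sform_add_right, ha, hb, add_zero]
    | smul c a _ ha => rw [sform_smul_right, ha, mul_zero]

lemma tau_single {n : ℕ} (j : Fin (2*n)) :
    (tauMat n).mulVecLin (Pi.single j 1) =
      if h : (j:ℕ)+1 < 2*n then Pi.single (⟨(j:ℕ)+1, h⟩ : Fin (2*n)) 1 else 0 := by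
  funext s
  simp only [mulVecLin_apply, Matrix.mulVec_single_one, Matrix.col_apply, tauMat, Matrix.of_apply, mul_one]
  by_cases hlt : (j:ℕ)+1 < 2*n
  · rw [dif_pos hlt, Pi.single_apply]
    by_cases h : (s:ℕ) = (j:ℕ)+1
    · rw [if_pos h, if_pos (Fin.ext h)]
    · rw [if_neg h, if_neg (fun hc => h (congrArg Fin.val hc))]
  · have hs := s.isLt
    have : ¬ (s:ℕ) = (j:ℕ)+1 := by omega
    simp [dif_neg hlt, this]

lemma finrank_coordSub {n : ℕ} {I : Finset ℕ} (hI : I ⊆ Finset.Icc 1 (2*n)) :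
    Module.finrank ℂ (coordSub n I) = I.card := by
  classical
  set T : Finset (Fin (2*n)) := Finset.univ.filter (fun j => (j:ℕ)+1 ∈ I) with hT
  set S : Finset (Fin (2*n) → ℂ) := T.image (fun j => Pi.single j 1) with hS
  have hinj : Set.InjOn (fun j : Fin (2*n) => Pi.single j (1:ℂ)) T := by
    intro a _ b _ hab
    by_contra hne
    have := congrFun hab a
    simp [Pi.single_apply, hne] at this
  have hset : {v : Fin (2*n) → ℂ | ∃ j : Fin (2*n), (j : ℕ) + 1 ∈ I ∧ v = Pi.single j 1} = (S : Set _) := by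
    ext v
    simp only [Set.mem_setOf_eq, hS, Finset.coe_image, Set.mem_image, Finset.mem_coe, hT,
      Finset.mem_filter, Finset.mem_univ, true_and]
    constructor
    · rintro ⟨j, hj, rfl⟩; exact ⟨j, hj, rfl⟩
    · rintro ⟨j, hj, rfl⟩; exact ⟨j, hj, rfl⟩
  have hli : LinearIndependent ℂ ((↑) : (↑S : Set (Fin (2*n) → ℂ)) → (Fin (2*n) → ℂ)) := by
    have hb := (Pi.basisFun ℂ (Fin (2*n))).linearIndependent
    have hrange : (S : Set _) ⊆ Set.range (Pi.basisFun ℂ (Fin (2*n))) := by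
      rintro v hv
      rw [hS] at hv
      simp only [Finset.coe_image, Set.mem_image] at hv
      obtain ⟨j, _, rfl⟩ := hv
      exact ⟨j, by simp⟩
    exact (hb.linearIndepOn_id).mono hrange
  rw [coordSub, hset, finrank_span_finset_eq_card hli, hS,
    Finset.card_image_of_injOn hinj]
  refine Finset.card_bij (fun j _ => (j:ℕ)+1) ?_ ?_ ?_
  · intro a ha; rw [hT] at ha; simpa using ha
  · intro a ha b hb hab
    exact Fin.ext (by omega)
  · intro b hb
    have hmem := hI hb
    rw [Finset.mem_Icc] at hmem
    have hj : b - 1 + 1 = b := by omega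
    refine ⟨⟨b-1, by omega⟩, ?_, ?_⟩
    · rw [hT, Finset.mem_filter]
      exact ⟨Finset.mem_univ _, by simpa [hj] using hb⟩
    · simpa using hj

/-- for k ≤ n and J ∈ JP(k,2n), the point p_J lies in X(k,2n)^{sp}
if and only if J_i ⊆ R(J_{−i}) for all i ∈ ℤ/2nℤ. -/
theorem statement5 (n k : ℕ) (hn : 1 ≤ n) (hk : k ≤ n)
    (J : ZMod (2*n) → Finset ℕ) (hJ : IsJP n k J) :
    memXsp n k (fun i => coordSub n (J i)) ↔ ∀ i, J i ⊆ RSet n (J (-i)) := by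
  obtain ⟨hJIcc, hJcard, hJstep⟩ := hJ
  have hmemX : memX n k (fun i => coordSub n (J i)) := by
    refine ⟨fun i => by rw [finrank_coordSub (hJIcc i), hJcard i], fun i => ?_⟩
    simp only [coordSub]
    rw [Submodule.map_span, Submodule.span_le]
    rintro v ⟨w, ⟨j, hj, rfl⟩, rfl⟩
    rw [SetLike.mem_coe, tau_single]
    by_cases hlt : (j:ℕ)+1 < 2*n
    · rw [dif_pos hlt]
      exact single_mem_coordSub (hJstep i ((j:ℕ)+1) (by omega) (by omega) hj)
    · rw [dif_neg hlt]; exact Submodule.zero_mem _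
  constructor
  · rintro ⟨-, hperp⟩ i a ha
    have hmem := hJIcc i ha
    rw [Finset.mem_Icc] at hmem
    rw [RSet, Finset.mem_sdiff]
    refine ⟨hJIcc i ha, ?_⟩
    rw [Finset.mem_image]
    rintro ⟨b, hb, hba⟩
    have hbmem := hJIcc (-i) hb
    rw [Finset.mem_Icc] at hbmem
    have hs : ((⟨a-1, by omega⟩ : Fin (2*n)) : ℕ) + 1 ∈ J i := by
      show a - 1 + 1 ∈ J i
      rwa [show a - 1 + 1 = a by omega]
    have ht : ((⟨b-1, by omega⟩ : Fin (2*n)) : ℕ) + 1 ∈ J (-i) := by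
      show b - 1 + 1 ∈ J (-i)
      rwa [show b - 1 + 1 = b by omega]
    have hcond := (coordSub_le_sperp_iff).mp (hperp i) _ _ hs ht
    rw [Omega_eq_zero_iff] at hcond
    apply hcond
    show a - 1 + 1 + (b - 1 + 1) = 2*n + 1
    omega
  · intro h
    refine ⟨hmemX, fun i => ?_⟩
    rw [coordSub_le_sperp_iff]
    intro s t hs ht
    rw [Omega_eq_zero_iff]
    intro heq
    have hmem := h i hs
    rw [RSet, Finset.mem_sdiff] at hmem
    exact hmem.2 (Finset.mem_image.mpr ⟨(t:ℕ)+1, ht, by omega⟩)
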